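/- Let f : E → ℝ be differentiable, L-smooth, and μ-strongly convex with 0 < μ ≤ L, let x* ∈ E be a global minimizer of f, and let x : ℕ → E be the gradient descent sequence with constant step size λ = 1/L starting from x_0 ≠ x*. Then for any ε > 0 and any n ≥ (L/μ)·ln(L·‖x_0 - x*‖²/(2ε)), one has f(x_n) - f(x*) ≤ ε. -/

import Mathlib

open RealInnerProductSpace Set

lemma descent_lemma' {E : Type*} [NormedAddCommGroup E] [InnerProductSpace ℝ E] [CompleteSpace E]
    (f : E → ℝ) (f' : E → E) (L : ℝ)
    (hdiff : ∀ x, HasGradientAt f (f' x) x)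
    (hsmooth : ∀ x y, ‖f' x - f' y‖ ≤ L * ‖x - y‖)
    (x y : E) : f y ≤ f x + ⟪f' x, y - x⟫ + L / 2 * ‖y - x‖ ^ 2 := by
  set v := y - x with hv
  have hline : ∀ t : ℝ, HasDerivAt (fun t : ℝ => x + t • v) v t := by
    intro t
    simpa using ((hasDerivAt_id t).smul_const v).const_add x
  have hg : ∀ t : ℝ, HasDerivAt (fun t => f (x + t • v)) ⟪f' (x + t • v), v⟫ t := by
    intro t
    have h1 := (hdiff (x + t • v)).hasFDerivAt
    have h2 := h1.comp_hasDerivAt t (hline t)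
    exact (by simpa using h2 : HasDerivAt (f ∘ fun t => x + t • v) ⟪f' (x + t • v), v⟫ t)
  set φ : ℝ → ℝ := fun t => f (x + t • v) - t * ⟪f' x, v⟫ - L * t ^ 2 / 2 * ‖v‖ ^ 2 with hφ
  have hφd : ∀ t : ℝ, HasDerivAt φ (⟪f' (x + t • v), v⟫ - ⟪f' x, v⟫ - L * t * ‖v‖ ^ 2) t := by
    intro t
    have h2 : HasDerivAt (fun t : ℝ => t * ⟪f' x, v⟫) ⟪f' x, v⟫ t := by
      simpa using (hasDerivAt_id t).mul_const ⟪f' x, v⟫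
    have h3 : HasDerivAt (fun t : ℝ => L * t ^ 2 / 2 * ‖v‖ ^ 2) (L * t * ‖v‖ ^ 2) t := by
      have h4 := (((hasDerivAt_pow 2 t).const_mul L).div_const 2).mul_const (‖v‖ ^ 2)
      exact h4.congr_deriv (by ring)
    exact ((hg t).sub h2).sub h3
  have hmono : AntitoneOn φ (Icc (0:ℝ) 1) := by
    apply antitoneOn_of_deriv_nonpos (convex_Icc 0 1)
    · exact fun t _ => ((hφd t).differentiableAt).continuousAt.continuousWithinAt
    · exact fun t _ => ((hφd t).differentiableAt).differentiableWithinAt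
    · intro t ht
      rw [interior_Icc] at ht
      rw [(hφd t).deriv]
      have h4 : ⟪f' (x + t • v) - f' x, v⟫ ≤ ‖f' (x + t • v) - f' x‖ * ‖v‖ :=
        real_inner_le_norm _ _
      rw [inner_sub_left] at h4
      have h5 : ‖f' (x + t • v) - f' x‖ ≤ L * (t * ‖v‖) := by
        have h6 := hsmooth (x + t • v) x
        simpa [norm_smul, abs_of_nonneg ht.1.le] using h6
      nlinarith [norm_nonneg v, norm_nonneg (f' (x + t • v) - f' x), ht.1]
  have key : φ 1 ≤ φ 0 := hmono (by norm_num) (by norm_num) zero_le_one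
  simp only [hφ, one_smul, zero_smul, add_zero, one_pow, mul_one, one_mul] at key
  have hxy : x + v = y := by rw [hv]; abel
  rw [hxy] at key
  linarith
theorem gd_strongly_convex_eps_complexity {E : Type*} [NormedAddCommGroup E]
    [InnerProductSpace ℝ E] [CompleteSpace E]
    (f : E → ℝ) (f' : E → E) (L μ : ℝ) (hμ : 0 < μ) (hμL : μ ≤ L)
    (hdiff : ∀ x, HasGradientAt f (f' x) x)
    (hsmooth : ∀ x y, ‖f' x - f' y‖ ≤ L * ‖x - y‖)
    (hstrong : ∀ x y, f x + ⟪f' x, y - x⟫ + (μ / 2) * ‖y - x‖ ^ 2 ≤ f y)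
    (xstar : E) (hmin : ∀ y, f xstar ≤ f y)
    (x : ℕ → E)
    (hiter : ∀ k, x (k + 1) = x k - (1 / L) • f' (x k))
    (hx0 : x 0 ≠ xstar) :
    ∀ ε : ℝ, 0 < ε → ∀ n : ℕ,
      (L / μ) * Real.log (L * ‖x 0 - xstar‖ ^ 2 / (2 * ε)) ≤ (n : ℝ) →
      f (x n) - f xstar ≤ ε := by
  have hL : 0 < L := hμ.trans_le hμL
  have desc := descent_lemma' f f' L hdiff hsmooth
  -- gradient zero at xstar
  have hgstar : f' xstar = 0 := by
    have h1 := desc xstar (xstar - (1 / L) • f' xstar)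
    have h2 := hmin (xstar - (1 / L) • f' xstar)
    rw [show xstar - (1 / L) • f' xstar - xstar = -((1 / L) • f' xstar) by abel] at h1
    rw [inner_neg_right, real_inner_smul_right, real_inner_self_eq_norm_sq,
      norm_neg, norm_smul, Real.norm_eq_abs, abs_of_pos (by positivity : (0:ℝ) < 1 / L),
      mul_pow] at h1
    have e1 : L / 2 * ((1 / L) ^ 2 * ‖f' xstar‖ ^ 2) = 1 / (2 * L) * ‖f' xstar‖ ^ 2 := by
      field_simp
    have e2 : 1 / L * ‖f' xstar‖ ^ 2 = 2 * (1 / (2 * L) * ‖f' xstar‖ ^ 2) := by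
      field_simp
    rw [e1] at h1
    have h3 : 1 / (2 * L) * ‖f' xstar‖ ^ 2 ≤ 0 := by linarith
    have h4 : ‖f' xstar‖ ^ 2 ≤ 0 := by
      by_contra h
      push_neg at h
      have : 0 < 1 / (2 * L) * ‖f' xstar‖ ^ 2 := by positivity
      linarith
    have h5 : ‖f' xstar‖ = 0 := by nlinarith [norm_nonneg (f' xstar)]
    exact norm_eq_zero.mp h5
  -- PL inequality
  have hPL : ∀ z : E, 2 * μ * (f z - f xstar) ≤ ‖f' z‖ ^ 2 := by
    intro z
    have h1 := hstrong z xstar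
    have habs : -(‖f' z‖ * ‖xstar - z‖) ≤ ⟪f' z, xstar - z⟫ := by
      have h := abs_real_inner_le_norm (f' z) (xstar - z)
      have := neg_abs_le (⟪f' z, xstar - z⟫ : ℝ)
      linarith
    have h3 : f z - f xstar ≤ ‖f' z‖ * ‖xstar - z‖ - μ / 2 * ‖xstar - z‖ ^ 2 := by
      linarith
    have h4 : 2 * μ * (f z - f xstar)
        ≤ 2 * μ * (‖f' z‖ * ‖xstar - z‖ - μ / 2 * ‖xstar - z‖ ^ 2) :=
      mul_le_mul_of_nonneg_left h3 (by positivity)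
    nlinarith [sq_nonneg (μ * ‖xstar - z‖ - ‖f' z‖)]
  -- one-step decrease
  have hstep : ∀ k, f (x (k + 1)) - f xstar ≤ (1 - μ / L) * (f (x k) - f xstar) := by
    intro k
    have h1 := desc (x k) (x (k + 1))
    rw [hiter k, show x k - (1 / L) • f' (x k) - x k = -((1 / L) • f' (x k)) by abel] at h1
    rw [inner_neg_right, real_inner_smul_right, real_inner_self_eq_norm_sq,
      norm_neg, norm_smul, Real.norm_eq_abs, abs_of_pos (by positivity : (0:ℝ) < 1 / L),
      mul_pow] at h1
    have e1 : L / 2 * ((1 / L) ^ 2 * ‖f' (x k)‖ ^ 2) = 1 / (2 * L) * ‖f' (x k)‖ ^ 2 := by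
      field_simp
    have e2 : 1 / L * ‖f' (x k)‖ ^ 2 = 2 * (1 / (2 * L) * ‖f' (x k)‖ ^ 2) := by
      field_simp
    rw [e1] at h1
    have h2 := hPL (x k)
    have h3 : f (x (k + 1)) ≤ f (x k) - 1 / (2 * L) * ‖f' (x k)‖ ^ 2 := by
      rw [hiter k]; linarith
    have h4 : 1 / (2 * L) * (2 * μ * (f (x k) - f xstar)) ≤ 1 / (2 * L) * ‖f' (x k)‖ ^ 2 :=
      mul_le_mul_of_nonneg_left h2 (by positivity)
    have h5 : 1 / (2 * L) * (2 * μ * (f (x k) - f xstar)) = μ / L * (f (x k) - f xstar) := by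
      field_simp
    nlinarith
  -- initial bound
  have hinit : f (x 0) - f xstar ≤ L / 2 * ‖x 0 - xstar‖ ^ 2 := by
    have h1 := desc xstar (x 0)
    rw [hgstar] at h1
    simp only [inner_zero_left, add_zero] at h1
    linarith
  have hrate : ∀ n : ℕ, f (x n) - f xstar ≤ (1 - μ / L) ^ n * (L / 2 * ‖x 0 - xstar‖ ^ 2) := by
    intro n
    induction n with
    | zero => simpa using hinit
    | succ k ih =>
      have hfac : (0:ℝ) ≤ 1 - μ / L := by
        have : μ / L ≤ 1 := (div_le_one hL).mpr hμL
        linarith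
      calc f (x (k + 1)) - f xstar ≤ (1 - μ / L) * (f (x k) - f xstar) := hstep k
        _ ≤ (1 - μ / L) * ((1 - μ / L) ^ k * (L / 2 * ‖x 0 - xstar‖ ^ 2)) :=
            mul_le_mul_of_nonneg_left ih hfac
        _ = (1 - μ / L) ^ (k + 1) * (L / 2 * ‖x 0 - xstar‖ ^ 2) := by ring
  intro ε hε n hn
  set Dv : ℝ := ‖x 0 - xstar‖ ^ 2 with hDv
  have hDpos : 0 < Dv := by
    have h0 : 0 < ‖x 0 - xstar‖ := norm_pos_iff.mpr (sub_ne_zero.mpr hx0)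
    rw [hDv]; positivity
  have hKpos : 0 < L * Dv / (2 * ε) := by positivity
  have hfac : (0:ℝ) ≤ 1 - μ / L := by
    have : μ / L ≤ 1 := (div_le_one hL).mpr hμL
    linarith
  have hexp1 : (1 - μ / L : ℝ) ≤ Real.exp (-(μ / L)) := by
    have := Real.add_one_le_exp (-(μ / L))
    linarith
  have hexp2 : (1 - μ / L : ℝ) ^ n ≤ Real.exp (-(μ / L)) ^ n :=
    pow_le_pow_left₀ hfac hexp1 n
  rw [← Real.exp_nat_mul] at hexp2
  have hcast : ((n : ℝ) * -(μ / L)) = -((n : ℝ) * (μ / L)) := by ring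
  rw [hcast] at hexp2
  have hlog : Real.log (L * Dv / (2 * ε)) ≤ (n : ℝ) * (μ / L) := by
    have hpos : (0:ℝ) < μ / L := div_pos hμ hL
    have h1 := mul_le_mul_of_nonneg_left hn hpos.le
    have h2 : (μ / L) * ((L / μ) * Real.log (L * Dv / (2 * ε)))
        = Real.log (L * Dv / (2 * ε)) := by
      field_simp
    calc Real.log (L * Dv / (2 * ε))
        = (μ / L) * ((L / μ) * Real.log (L * Dv / (2 * ε))) := h2.symm
      _ ≤ (μ / L) * (n : ℝ) := h1
      _ = (n : ℝ) * (μ / L) := by ring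
  have he : Real.exp (-((n : ℝ) * (μ / L))) ≤ (L * Dv / (2 * ε))⁻¹ := by
    have h1 : Real.exp (-((n : ℝ) * (μ / L))) ≤ Real.exp (-Real.log (L * Dv / (2 * ε))) :=
      Real.exp_le_exp.mpr (neg_le_neg hlog)
    have h2 : Real.exp (-Real.log (L * Dv / (2 * ε))) = (L * Dv / (2 * ε))⁻¹ := by
      rw [Real.exp_neg, Real.exp_log hKpos]
    linarith
  have hfin : (L * Dv / (2 * ε))⁻¹ * (L / 2 * Dv) = ε := by
    field_simp
  have hbound := hrate n
  have h6 : (1 - μ / L) ^ n * (L / 2 * Dv) ≤ Real.exp (-((n : ℝ) * (μ / L))) * (L / 2 * Dv) :=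
    mul_le_mul_of_nonneg_right hexp2 (by positivity)
  have h7 : Real.exp (-((n : ℝ) * (μ / L))) * (L / 2 * Dv) ≤ (L * Dv / (2 * ε))⁻¹ * (L / 2 * Dv) :=
    mul_le_mul_of_nonneg_right he (by positivity)
  linarith
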